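/- arXiv:2511.10815 — 2 statements merged into one kernel-verified Lean document; each statement's English description precedes it below -/
import Mathlib

section
/- Let y : [0,t] → ℝⁿ be M-Lipschitz and suppose dist(y(τ),𝔐) > δ for some τ with δ/(2M) ≤ τ ≤ t − δ/(2M), where f satisfies the gap condition (A3). Then the discounted occupation fraction satisfies (λ/(1−e^{-λt})) ∫₀ᵗ 1_{f(y(s)) > f̲ + γ(δ/2)} e^{-λs} ds ≥ λ e^{-λτ} δ/(M(1−e^{-λt})). -/
open MeasureTheory Real

/-- Lower bound on the discounted occupation fraction: if an `M`-Lipschitz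
trajectory is at distance `> δ` from `𝔐` at an interior time `τ`, then
`(λ/(1−e^{-λt})) ∫₀ᵗ 1_{f(y(s)) > f̲ + γ(δ/2)} e^{-λs} ds ≥ λ e^{-λτ} δ/(M(1−e^{-λt}))`. -/
theorem stmt_13 (n : ℕ) (f : EuclideanSpace ℝ (Fin n) → ℝ) (C fbar : ℝ)
    (hf : Continuous f) (hC : ∀ x, |f x| ≤ C)
    (hmin : ∀ x, fbar ≤ f x)
    (Mset : Set (EuclideanSpace ℝ (Fin n)))
    (hMset : Mset = {x | f x = fbar}) (hMne : Mset.Nonempty)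
    (γ : ℝ → ℝ)
    (hγpos : ∀ δ > (0:ℝ), 0 < γ δ)
    (hgap : ∀ δ > (0:ℝ), ∀ z, δ < Metric.infDist z Mset → fbar + γ δ < f z)
    (t lam M δ τ : ℝ) (ht : 0 < t) (hlam : 0 < lam) (hMpos : 0 < M) (hδ : 0 < δ)
    (y : ℝ → EuclideanSpace ℝ (Fin n))
    (hLip : ∀ s₁ ∈ Set.Icc (0:ℝ) t, ∀ s₂ ∈ Set.Icc (0:ℝ) t,
      dist (y s₁) (y s₂) ≤ M * |s₁ - s₂|)
    (hτ₁ : δ / (2 * M) ≤ τ) (hτ₂ : τ ≤ t - δ / (2 * M))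
    (hfar : δ < Metric.infDist (y τ) Mset) :
    lam * exp (-lam * τ) * δ / (M * (1 - exp (-lam * t))) ≤
      (lam / (1 - exp (-lam * t))) *
        (∫ s in (0:ℝ)..t, (if fbar + γ (δ / 2) < f (y s) then exp (-lam * s) else 0)) := by
  set h : ℝ := δ / (2 * M) with hh
  have hhpos : 0 < h := by positivity
  set a : ℝ := τ - h with ha
  set b : ℝ := τ + h with hb
  have ha0 : 0 ≤ a := by simp only [ha]; linarith
  have hbt : b ≤ t := by simp only [hb]; linarith
  have hab : a ≤ b := by simp only [ha, hb]; linarith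
  have hτmem : τ ∈ Set.Icc (0:ℝ) t := ⟨by linarith, by linarith⟩
  set g : ℝ → ℝ := fun s => if fbar + γ (δ / 2) < f (y s) then exp (-lam * s) else 0 with hg
  -- pointwise: on [a,b], the condition holds
  have key : ∀ s ∈ Set.Icc a b, fbar + γ (δ / 2) < f (y s) := by
    intro s hs
    have hsmem : s ∈ Set.Icc (0:ℝ) t := ⟨le_trans ha0 hs.1, le_trans hs.2 hbt⟩
    have hd : dist (y s) (y τ) ≤ δ / 2 := by
      have := hLip s hsmem τ hτmem
      have habs : |s - τ| ≤ h := abs_le.2 ⟨by simp only [ha] at hs; linarith [hs.1],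
        by simp only [hb] at hs; linarith [hs.2]⟩
      calc dist (y s) (y τ) ≤ M * |s - τ| := this
        _ ≤ M * h := by nlinarith
        _ = δ / 2 := by rw [hh]; field_simp
    have htri : Metric.infDist (y τ) Mset ≤ Metric.infDist (y s) Mset + dist (y τ) (y s) :=
      Metric.infDist_le_infDist_add_dist
    have : δ / 2 < Metric.infDist (y s) Mset := by
      rw [dist_comm] at htri; linarith
    exact hgap (δ / 2) (by linarith) (y s) this
  -- nonnegativity of g
  have hg0 : ∀ s, 0 ≤ g s := by
    intro s; simp only [hg]
    split <;> [exact (exp_pos _).le; exact le_rfl]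
  -- measurability / integrability on Ioc 0 t
  have hyc : ContinuousOn y (Set.Icc 0 t) := by
    have : LipschitzOnWith (Real.toNNReal M) y (Set.Icc 0 t) := by
      rw [lipschitzOnWith_iff_dist_le_mul]
      intro x hx z hz
      have := hLip x hx z hz
      rw [Real.dist_eq]
      calc dist (y x) (y z) ≤ M * |x - z| := this
        _ ≤ Real.toNNReal M * |x - z| := by
            gcongr; exact le_max_left _ _
    exact this.continuousOn
  have hFc : ContinuousOn (fun s => f (y s)) (Set.Icc 0 t) := hf.comp_continuousOn hyc
  have hFm : AEMeasurable (fun s => f (y s)) (volume.restrict (Set.Ioc 0 t)) := by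
    have : AEMeasurable (fun s => f (y s)) (volume.restrict (Set.Icc 0 t)) :=
      (hFc.aemeasurable measurableSet_Icc)
    exact this.mono_measure (Measure.restrict_mono Set.Ioc_subset_Icc_self le_rfl)
  have hgm : AEStronglyMeasurable g (volume.restrict (Set.Ioc 0 t)) := by
    obtain ⟨F', hF'm, hF'e⟩ := hFm
    refine ⟨fun s => if fbar + γ (δ / 2) < F' s then exp (-lam * s) else 0,
      StronglyMeasurable.ite (measurableSet_lt measurable_const hF'm)
        (Real.continuous_exp.comp (continuous_const.mul continuous_id)).stronglyMeasurable
        stronglyMeasurable_const, ?_⟩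
    · filter_upwards [hF'e] with s hs
      simp only [hg, hs]
  have hgint : IntegrableOn g (Set.Ioc 0 t) := by
    refine Integrable.mono' (g := fun s => exp (-lam * s)) ?_ hgm ?_
    · exact (Real.continuous_exp.comp (continuous_const.mul continuous_id)).integrableOn_Ioc
    · filter_upwards with s
      simp only [hg]
      split
      · rw [Real.norm_eq_abs, abs_of_nonneg (exp_pos _).le]
      · simp only [norm_zero]; positivity
  -- g equals exp on Ioc a b
  have hgeq : ∀ s ∈ Set.Ioc a b, g s = exp (-lam * s) := by
    intro s hs
    have : fbar + γ (δ / 2) < f (y s) := key s ⟨hs.1.le, hs.2⟩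
    simp only [hg, if_pos this]
  -- the interval integral equals the set integral
  have hint_eq : (∫ s in (0:ℝ)..t, g s) = ∫ s in Set.Ioc 0 t, g s :=
    intervalIntegral.integral_of_le ht.le
  have hsub : Set.Ioc a b ⊆ Set.Ioc 0 t := Set.Ioc_subset_Ioc ha0 hbt
  have step1 : (∫ s in Set.Ioc a b, g s) ≤ ∫ s in Set.Ioc 0 t, g s := by
    apply setIntegral_mono_set hgint
    · filter_upwards with s using hg0 s
    · exact Filter.Eventually.of_forall hsub
  have step2 : (∫ s in Set.Ioc a b, g s) = ∫ s in a..b, exp (-lam * s) := by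
    rw [intervalIntegral.integral_of_le hab]
    apply setIntegral_congr_fun measurableSet_Ioc
    intro s hs; exact hgeq s hs
  have hval : (∫ s in a..b, exp (-lam * s)) = (exp (-lam * a) - exp (-lam * b)) / lam := by
    rw [intervalIntegral.integral_comp_mul_left (fun x => exp x)
      (neg_ne_zero.2 hlam.ne'), integral_exp, smul_eq_mul]
    field_simp [hlam.ne']
    ring
  have h1E : 0 < 1 - exp (-lam * t) := by
    have : exp (-lam * t) < exp 0 := exp_lt_exp.2 (by nlinarith)
    rw [exp_zero] at this; linarith
  have hI : exp (-lam * τ) * δ / M ≤ ∫ s in (0:ℝ)..t, g s := by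
    rw [hint_eq]
    refine le_trans ?_ step1
    rw [step2, hval]
    have hs' : 2 * (lam * h) < exp (lam * h) - exp (-(lam * h)) := by
      have hs := self_lt_sinh_iff.2 (show 0 < lam * h by positivity)
      rw [sinh_eq] at hs; linarith
    have hea : exp (-lam * a) = exp (-lam * τ) * exp (lam * h) := by
      rw [← exp_add, ha]; ring_nf
    have heb : exp (-lam * b) = exp (-lam * τ) * exp (-(lam * h)) := by
      rw [← exp_add, hb]; ring_nf
    rw [hea, heb, div_le_div_iff₀ hMpos hlam]
    have hh' : 2 * M * h = δ := by rw [hh]; field_simp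
    nlinarith [mul_pos (mul_pos (exp_pos (-lam * τ)) hMpos) (sub_pos.2 hs'),
      mul_pos (exp_pos (-lam * τ)) hlam, exp_pos (-lam * τ)]
  calc lam * exp (-lam * τ) * δ / (M * (1 - exp (-lam * t)))
      = (lam / (1 - exp (-lam * t))) * (exp (-lam * τ) * δ / M) := by
        field_simp
    _ ≤ (lam / (1 - exp (-lam * t))) *
        (∫ s in (0:ℝ)..t, (if fbar + γ (δ / 2) < f (y s) then exp (-lam * s) else 0)) := by
        exact mul_le_mul_of_nonneg_left hI (le_of_lt (div_pos hlam h1E))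
end

section
/- (Lyapunov stability, un-discounted case) Assume f continuous, bounded, attains its minimum on 𝔐, satisfies the gap condition (A3), and let y be an ε-optimal M-Lipschitz trajectory for the un-discounted finite-horizon problem starting at x. Fix δ > 0. If dist(x,𝔐) ≤ η, ε and η are small enough that ηR + ε < γ(δ/2)·δ/M (with R a Lipschitz constant of u(·,t)), then dist(y(s),𝔐) ≤ δ for all s ∈ [δ/(2M), t − δ/(2M)]. -/
open MeasureTheory Real

/-- Lyapunov stability, un-discounted case: if `dist(x,𝔐) ≤ η` and
`ηR + ε < γ(δ/2)·δ/M`, then an ε-optimal `M`-Lipschitz trajectory stays within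
distance `δ` of `𝔐` on `[δ/(2M), t − δ/(2M)]`. -/
theorem stmt_15 (n : ℕ) (f : EuclideanSpace ℝ (Fin n) → ℝ) (C fbar : ℝ)
    (hf : Continuous f) (hC : ∀ x, |f x| ≤ C)
    (hmin : ∀ x, fbar ≤ f x)
    (Mset : Set (EuclideanSpace ℝ (Fin n)))
    (hMset : Mset = {x | f x = fbar}) (hMne : Mset.Nonempty)
    (γ : ℝ → ℝ)
    (hγpos : ∀ δ > (0:ℝ), 0 < γ δ)
    (hgap : ∀ δ > (0:ℝ), ∀ z, δ < Metric.infDist z Mset → fbar + γ δ < f z)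
    (t M R ε η δ : ℝ) (ht : 0 < t) (hMpos : 0 < M) (hε : 0 ≤ ε)
    (hη : 0 ≤ η) (hδ : 0 < δ)
    (u : EuclideanSpace ℝ (Fin n) → ℝ)
    (hu : ∀ x, u x = sInf {c : ℝ | ∃ α : ℝ → EuclideanSpace ℝ (Fin n), Measurable α ∧
      c = ∫ s in (0:ℝ)..t, ((1/2) * ‖α s‖^2 + f (x + ∫ r in (0:ℝ)..s, α r))})
    (hLip : ∀ x y, |u x - u y| ≤ R * dist x y)
    (x : EuclideanSpace ℝ (Fin n))
    (y y' : ℝ → EuclideanSpace ℝ (Fin n))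
    (hy0 : y 0 = x)
    (hy' : ∀ s ∈ Set.Icc (0:ℝ) t, HasDerivAt y (y' s) s)
    (hyLip : ∀ s₁ ∈ Set.Icc (0:ℝ) t, ∀ s₂ ∈ Set.Icc (0:ℝ) t,
      dist (y s₁) (y s₂) ≤ M * |s₁ - s₂|)
    (hcost : (∫ s in (0:ℝ)..t, ((1/2) * ‖y' s‖^2 + f (y s))) ≤ u x + ε)
    (hclose : Metric.infDist x Mset ≤ η)
    (hsmall : η * R + ε < γ (δ / 2) * δ / M) :
    ∀ s ∈ Set.Icc (δ / (2 * M)) (t - δ / (2 * M)),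
      Metric.infDist (y s) Mset ≤ δ := by
  rcases subsingleton_or_nontrivial (EuclideanSpace ℝ (Fin n)) with hss | hnt
  · intro s _
    obtain ⟨z, hz⟩ := hMne
    have hyz : y s = z := Subsingleton.elim _ _
    have h1 := Metric.infDist_le_dist_of_mem (x := y s) hz
    have h2 : dist (y s) z = 0 := by rw [hyz, dist_self]
    linarith
  -- R ≥ 0
  have hR : 0 ≤ R := by
    obtain ⟨p, q, hpq⟩ := exists_pair_ne (EuclideanSpace ℝ (Fin n))
    have h0 : (0:ℝ) ≤ R * dist p q := le_trans (abs_nonneg _) (hLip p q)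
    have hd : 0 < dist p q := dist_pos.2 hpq
    by_contra hRneg
    push_neg at hRneg
    nlinarith
  intro s₀ hs₀
  by_contra hcon
  push_neg at hcon
  set G := γ (δ / 2) with hGdef
  have hG : 0 < G := hγpos _ (by positivity)
  -- u z ≤ t * fbar for z ∈ Mset
  have hu_le : ∀ z ∈ Mset, u z ≤ t * fbar := by
    intro z hz
    have hfz : f z = fbar := by rw [hMset] at hz; exact hz
    rw [hu z]
    apply csInf_le
    · refine ⟨min (t * fbar) 0, ?_⟩
      rintro c ⟨α, hα, rfl⟩
      by_cases hint : IntervalIntegrable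
          (fun s => (1/2) * ‖α s‖^2 + f (z + ∫ r in (0:ℝ)..s, α r)) volume 0 t
      · refine le_trans (min_le_left _ _) ?_
        have hmono := intervalIntegral.integral_mono_on (μ := volume) ht.le
          (intervalIntegrable_const (c := fbar)) hint
          (by
            intro s _
            have h1 := hmin (z + ∫ r in (0:ℝ)..s, α r)
            have h2 : (0:ℝ) ≤ (1/2) * ‖α s‖^2 := by positivity
            linarith)
        simpa using hmono
      · rw [intervalIntegral.integral_undef hint]
        exact min_le_right _ _
    · exact ⟨fun _ => 0, measurable_const, by simp [hfz]⟩
  -- u x ≤ t * fbar + R * dist x z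
  have hux : ∀ z ∈ Mset, u x ≤ t * fbar + R * dist x z := by
    intro z hz
    have h1 : u x - u z ≤ R * dist x z := le_trans (le_abs_self _) (hLip x z)
    linarith [hu_le z hz]
  -- continuity of y on [0,t]
  have hy_cont : ContinuousOn y (Set.Icc 0 t) :=
    fun s hs => (hy' s hs).continuousAt.continuousWithinAt
  -- integrability of f ∘ y
  have hfy_int : IntervalIntegrable (fun s => f (y s)) volume 0 t := by
    apply ContinuousOn.intervalIntegrable
    rw [Set.uIcc_of_le ht.le]
    exact hf.comp_continuousOn hy_cont
  -- bound on derivative in the interior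
  have hybound : ∀ s ∈ Set.Ioo (0:ℝ) t, ‖y' s‖ ≤ M := by
    intro s hs
    have hfd := (hy' s (Set.Ioo_subset_Icc_self hs)).hasFDerivAt
    have hev : ∀ᶠ z in nhds s, ‖y z - y s‖ ≤ M * ‖z - s‖ := by
      filter_upwards [Icc_mem_nhds hs.1 hs.2] with z hz
      have := hyLip z hz s (Set.Ioo_subset_Icc_self hs)
      rw [dist_eq_norm] at this
      simpa [Real.norm_eq_abs] using this
    have hle := hfd.le_of_lip' hMpos.le hev
    have hnorm : ‖ContinuousLinearMap.toSpanSingleton ℝ (y' s)‖ = ‖y' s‖ := by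
      simp [ContinuousLinearMap.norm_toSpanSingleton]
    rwa [hnorm] at hle
  -- integrability of (1/2)‖y'‖²
  have hderiv_eq : ∀ s ∈ Set.Icc (0:ℝ) t, deriv y s = y' s := fun s hs => (hy' s hs).deriv
  have hmeasφ : Measurable (fun s => (1/2 : ℝ) * ‖deriv y s‖^2) :=
    (((measurable_deriv y).norm).pow_const 2).const_mul (1/2)
  have h2' : IntegrableOn (fun s => (1/2 : ℝ) * ‖y' s‖^2) (Set.Ioo 0 t) := by
    apply Integrable.mono' (g := fun _ => (1/2 : ℝ) * M^2)
      (integrableOn_const measure_Ioo_lt_top.ne)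
    · refine (hmeasφ.aestronglyMeasurable.restrict).congr ?_
      filter_upwards [ae_restrict_mem measurableSet_Ioo] with s hs
      rw [hderiv_eq s (Set.Ioo_subset_Icc_self hs)]
    · filter_upwards [ae_restrict_mem measurableSet_Ioo] with s hs
      have h1 := hybound s hs
      have h2 := norm_nonneg (y' s)
      rw [Real.norm_eq_abs, abs_of_nonneg (by positivity)]
      nlinarith
  have h2 : IntervalIntegrable (fun s => (1/2 : ℝ) * ‖y' s‖^2) volume 0 t := by
    rw [intervalIntegrable_iff_integrableOn_Ioo_of_le ht.le]
    exact h2'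
  -- the bad window [a,b]
  have hd2 : 0 < δ / (2 * M) := by positivity
  set a := s₀ - δ / (2 * M) with hadef
  set b := s₀ + δ / (2 * M) with hbdef
  have ha0 : 0 ≤ a := by have := hs₀.1; simp only [hadef]; linarith
  have hbt : b ≤ t := by have := hs₀.2; simp only [hbdef]; linarith
  have hab : a ≤ b := by simp only [hadef, hbdef]; linarith
  have hs₀t : s₀ ∈ Set.Icc (0:ℝ) t := ⟨by linarith [hs₀.1], by linarith [hs₀.2]⟩
  have hMhalf : M * (δ / (2 * M)) = δ / 2 := by field_simp
  have hpt : ∀ s ∈ Set.Icc a b, G ≤ f (y s) - fbar := by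
    intro s hs
    have hst : s ∈ Set.Icc (0:ℝ) t := ⟨le_trans ha0 hs.1, le_trans hs.2 hbt⟩
    have habs : |s₀ - s| ≤ δ / (2 * M) := by
      rw [abs_le]
      constructor
      · have := hs.2; simp only [hbdef] at this; linarith
      · have := hs.1; simp only [hadef] at this; linarith
    have hdist : dist (y s₀) (y s) ≤ δ / 2 := by
      have h1 := hyLip s₀ hs₀t s hst
      calc dist (y s₀) (y s) ≤ M * |s₀ - s| := h1
        _ ≤ M * (δ / (2 * M)) := by
            exact mul_le_mul_of_nonneg_left habs hMpos.le
        _ = δ / 2 := hMhalf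
    have hinf : δ / 2 < Metric.infDist (y s) Mset := by
      have h := Metric.infDist_le_infDist_add_dist (x := y s₀) (y := y s) (s := Mset)
      linarith [hcon]
    linarith [hgap (δ/2) (by positivity) (y s) hinf]
  -- integral lower bound
  have h_sub : IntervalIntegrable (fun s => f (y s) - fbar) volume 0 t :=
    hfy_int.sub intervalIntegrable_const
  have h_sub_ab : IntervalIntegrable (fun s => f (y s) - fbar) volume a b := by
    apply h_sub.mono_set
    rw [Set.uIcc_of_le hab, Set.uIcc_of_le ht.le]
    exact Set.Icc_subset_Icc ha0 hbt
  have hstep2 : (b - a) * G ≤ ∫ s in a..b, (f (y s) - fbar) := by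
    have := intervalIntegral.integral_mono_on (μ := volume) hab
      (intervalIntegrable_const (c := G)) h_sub_ab hpt
    simpa [smul_eq_mul] using this
  have hstep1 : (∫ s in a..b, (f (y s) - fbar)) ≤ ∫ s in (0:ℝ)..t, (f (y s) - fbar) :=
    intervalIntegral.integral_mono_interval ha0 hab hbt
      (Filter.Eventually.of_forall (fun s => sub_nonneg.2 (hmin (y s)))) h_sub
  have hstep3 : (∫ s in (0:ℝ)..t, (f (y s) - fbar))
      = (∫ s in (0:ℝ)..t, f (y s)) - t * fbar := by
    rw [intervalIntegral.integral_sub hfy_int intervalIntegrable_const,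
      intervalIntegral.integral_const]
    simp [smul_eq_mul]
  have hstep4 : 0 ≤ ∫ s in (0:ℝ)..t, (1/2 : ℝ) * ‖y' s‖^2 :=
    intervalIntegral.integral_nonneg ht.le (fun s _ => by positivity)
  have hadd : (∫ s in (0:ℝ)..t, ((1/2) * ‖y' s‖^2 + f (y s)))
      = (∫ s in (0:ℝ)..t, (1/2 : ℝ) * ‖y' s‖^2) + ∫ s in (0:ℝ)..t, f (y s) :=
    intervalIntegral.integral_add h2 hfy_int
  have hba : (b - a) * G = G * δ / M := by
    simp only [hadef, hbdef]
    field_simp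
    ring
  have key : t * fbar + G * δ / M ≤ ∫ s in (0:ℝ)..t, ((1/2) * ‖y' s‖^2 + f (y s)) := by
    rw [hadd]
    have := hstep2
    rw [hba] at this
    linarith
  -- combine with upper bound
  have hRineq : ∀ z ∈ Mset, G * δ / M ≤ R * dist x z + ε := by
    intro z hz
    linarith [key, hcost, hux z hz]
  rcases eq_or_lt_of_le hR with hR0 | hRpos
  · obtain ⟨z, hz⟩ := hMne
    have := hRineq z hz
    rw [← hR0] at this
    rw [← hR0] at hsmall
    simp at this hsmall
    linarith
  · have hβη : η < (G * δ / M - ε) / R := by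
      rw [lt_div_iff₀ hRpos]
      linarith
    have hlt : Metric.infDist x Mset < (G * δ / M - ε) / R := lt_of_le_of_lt hclose hβη
    obtain ⟨z, hz, hdz⟩ := (Metric.infDist_lt_iff hMne).1 hlt
    have h1 := hRineq z hz
    rw [lt_div_iff₀ hRpos] at hdz
    have hc : R * dist x z = dist x z * R := mul_comm _ _
    linarith
end
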